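/- Let M ∈ ℝ^{m×n} have singular value decomposition M = UΣVᵀ with singular values σ₁ ≥ σ₂ ≥ ... ≥ 0, and let M_r = U_r Σ_r V_rᵀ be the truncation to the top r singular values. Then for every matrix Z with rank(Z) ≤ r, ‖M − Z‖_F² ≥ Σ_{i>r} σ_i² = ‖M − M_r‖_F². -/
import Mathlib


open Matrix

def frobSq {m n : ℕ} (A : Matrix (Fin m) (Fin n) ℝ) : ℝ :=
  ∑ i, ∑ j, (A i j) ^ 2

namespace EYMaux

lemma frobSq_eq_trace {m n : ℕ} (A : Matrix (Fin m) (Fin n) ℝ) :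
    frobSq A = (Aᵀ * A).trace := by
  simp only [frobSq, Matrix.trace, Matrix.diag, Matrix.mul_apply, Matrix.transpose_apply, sq]
  rw [Finset.sum_comm]

lemma frobSq_nonneg {m n : ℕ} (A : Matrix (Fin m) (Fin n) ℝ) : 0 ≤ frobSq A := by
  unfold frobSq; positivity

lemma trace_conj_nonneg {m n : ℕ} (A : Matrix (Fin m) (Fin n) ℝ) :
    0 ≤ (Aᵀ * A).trace := (frobSq_eq_trace A) ▸ frobSq_nonneg A

lemma frobSq_mul_left {m k n : ℕ} (U : Matrix (Fin m) (Fin k) ℝ) (hU : Uᵀ * U = 1)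
    (B : Matrix (Fin k) (Fin n) ℝ) : frobSq (U * B) = frobSq B := by
  rw [frobSq_eq_trace, frobSq_eq_trace, Matrix.transpose_mul, Matrix.mul_assoc,
    ← Matrix.mul_assoc Uᵀ U B, hU, Matrix.one_mul]

lemma frobSq_mul_right {m k n : ℕ} (V : Matrix (Fin n) (Fin k) ℝ) (hV : Vᵀ * V = 1)
    (B : Matrix (Fin m) (Fin k) ℝ) : frobSq (B * Vᵀ) = frobSq B := by
  rw [frobSq_eq_trace, frobSq_eq_trace, Matrix.transpose_mul, Matrix.transpose_transpose,
    Matrix.trace_mul_comm, Matrix.mul_assoc, ← Matrix.mul_assoc Vᵀ V Bᵀ, hV, Matrix.one_mul,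
    Matrix.trace_mul_comm]

lemma sum_smul_vecMulVec {m n k : ℕ} (U : Matrix (Fin m) (Fin k) ℝ)
    (V : Matrix (Fin n) (Fin k) ℝ) (a : Fin k → ℝ) (s : Finset (Fin k)) :
    ∑ i ∈ s, a i • Matrix.vecMulVec (fun p => U p i) (fun q => V q i)
      = U * Matrix.diagonal (fun i => if i ∈ s then a i else 0) * Vᵀ := by
  ext p q
  simp only [Finset.sum_apply, Matrix.sum_apply, Matrix.smul_apply, Matrix.vecMulVec_apply,
    Matrix.mul_apply, Matrix.diagonal_apply, Matrix.transpose_apply, smul_eq_mul,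
    mul_ite, mul_zero, ite_mul, zero_mul, Finset.sum_ite_eq', Finset.mem_univ, if_true]
  rw [← Finset.sum_filter]
  simp only [Finset.filter_mem_eq_inter, Finset.univ_inter]
  exact Finset.sum_congr rfl fun i _ => by ring

lemma frobSq_diagonal {k : ℕ} (a : Fin k → ℝ) :
    frobSq (Matrix.diagonal a) = ∑ i, a i ^ 2 := by
  unfold frobSq
  simp [Matrix.diagonal_apply, apply_ite (fun x : ℝ => x ^ 2)]

lemma frobSq_diagonal_mul {k d : ℕ} (a : Fin k → ℝ) (N : Matrix (Fin k) (Fin d) ℝ) :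
    frobSq (Matrix.diagonal a * N) = ∑ i, a i ^ 2 * ∑ j, (N i j) ^ 2 := by
  unfold frobSq
  simp only [Matrix.mul_apply, Matrix.diagonal_apply, ite_mul, zero_mul,
    Finset.sum_ite_eq, Finset.mem_univ, if_true, Finset.mul_sum, mul_pow]

section proj
variable {n d : ℕ} (W : Matrix (Fin n) (Fin d) ℝ)

lemma proj_symm : (W * Wᵀ)ᵀ = W * Wᵀ := by
  rw [Matrix.transpose_mul, Matrix.transpose_transpose]

lemma proj_idem (hW : Wᵀ * W = 1) : (W * Wᵀ) * (W * Wᵀ) = W * Wᵀ := by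
  rw [Matrix.mul_assoc, ← Matrix.mul_assoc Wᵀ W, hW, Matrix.one_mul]

lemma coproj_symm : (1 - W * Wᵀ)ᵀ = 1 - W * Wᵀ := by
  rw [Matrix.transpose_sub, Matrix.transpose_one, proj_symm]

lemma coproj_idem (hW : Wᵀ * W = 1) :
    (1 - W * Wᵀ) * (1 - W * Wᵀ) = 1 - W * Wᵀ := by
  rw [Matrix.mul_sub, Matrix.mul_one, Matrix.sub_mul, Matrix.one_mul, proj_idem W hW]
  abel

lemma trace_mul_proj_le {a : ℕ} (X : Matrix (Fin a) (Fin n) ℝ) (hW : Wᵀ * W = 1) :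
    (Xᵀ * X * (W * Wᵀ)).trace ≤ (Xᵀ * X).trace := by
  have key : ((X * (1 - W * Wᵀ))ᵀ * (X * (1 - W * Wᵀ))).trace
      = (Xᵀ * X).trace - (Xᵀ * (X * (W * Wᵀ))).trace := by
    calc ((X * (1 - W * Wᵀ))ᵀ * (X * (1 - W * Wᵀ))).trace
        = ((1 - W * Wᵀ) * (Xᵀ * (X * (1 - W * Wᵀ)))).trace := by
          rw [Matrix.transpose_mul, coproj_symm, Matrix.mul_assoc]
      _ = ((Xᵀ * (X * (1 - W * Wᵀ))) * (1 - W * Wᵀ)).trace := Matrix.trace_mul_comm _ _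
      _ = (Xᵀ * (X * ((1 - W * Wᵀ) * (1 - W * Wᵀ)))).trace := by
          rw [Matrix.mul_assoc, Matrix.mul_assoc]
      _ = (Xᵀ * (X * (1 - W * Wᵀ))).trace := by rw [coproj_idem W hW]
      _ = (Xᵀ * X).trace - (Xᵀ * (X * (W * Wᵀ))).trace := by
          rw [Matrix.mul_sub, Matrix.mul_one, Matrix.mul_sub, Matrix.trace_sub]
  have h := trace_conj_nonneg (X * (1 - W * Wᵀ))
  rw [key] at h
  rw [Matrix.mul_assoc]
  linarith

end proj

lemma frobSq_mul_le {m n d : ℕ} (A : Matrix (Fin m) (Fin n) ℝ)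
    (W : Matrix (Fin n) (Fin d) ℝ) (hW : Wᵀ * W = 1) :
    frobSq (A * W) ≤ frobSq A := by
  rw [frobSq_eq_trace, frobSq_eq_trace]
  have h1 : ((A * W)ᵀ * (A * W)).trace = (Aᵀ * A * (W * Wᵀ)).trace := by
    rw [Matrix.transpose_mul, ← Matrix.mul_assoc, Matrix.trace_mul_comm,
      Matrix.mul_assoc (Wᵀ) (Aᵀ) A, ← Matrix.mul_assoc W (Wᵀ) (Aᵀ * A),
      Matrix.trace_mul_comm]
  rw [h1]
  exact trace_mul_proj_le W (X := A) hW

lemma diag_conj_nonneg {m n : ℕ} (X : Matrix (Fin m) (Fin n) ℝ) (i : Fin n) :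
    0 ≤ (Xᵀ * X) i i := by
  rw [Matrix.mul_apply]
  exact Finset.sum_nonneg fun q _ => by
    simp only [Matrix.transpose_apply]; exact mul_self_nonneg _

lemma c_le_one {n k d : ℕ} (V : Matrix (Fin n) (Fin k) ℝ) (hV : Vᵀ * V = 1)
    (W : Matrix (Fin n) (Fin d) ℝ) (hW : Wᵀ * W = 1) (i : Fin k) :
    ∑ j, ((Vᵀ * W) i j) ^ 2 ≤ 1 := by
  have h1 : ∑ j, ((Vᵀ * W) i j) ^ 2 = ((Vᵀ * W) * (Vᵀ * W)ᵀ) i i := by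
    rw [Matrix.mul_apply]
    exact Finset.sum_congr rfl fun j _ => by
      simp [Matrix.transpose_apply, sq]
  have h1' : (Vᵀ * W) * (Vᵀ * W)ᵀ = Vᵀ * (W * Wᵀ * V) := by
    rw [Matrix.transpose_mul, Matrix.transpose_transpose, Matrix.mul_assoc,
      ← Matrix.mul_assoc W Wᵀ V]
  have h2 : ((1 - W * Wᵀ) * V)ᵀ * ((1 - W * Wᵀ) * V) = Vᵀ * V - Vᵀ * (W * Wᵀ * V) := by
    rw [Matrix.transpose_mul, coproj_symm, Matrix.mul_assoc,
      ← Matrix.mul_assoc (1 - W * Wᵀ) (1 - W * Wᵀ) V, coproj_idem W hW,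
      Matrix.sub_mul, Matrix.one_mul, Matrix.mul_sub]
  have h3 := diag_conj_nonneg ((1 - W * Wᵀ) * V) i
  rw [h2, Matrix.sub_apply, hV, Matrix.one_apply_eq] at h3
  rw [h1, h1']
  linarith

lemma sumc_ge {n k d : ℕ} (V : Matrix (Fin n) (Fin k) ℝ) (hV : Vᵀ * V = 1)
    (W : Matrix (Fin n) (Fin d) ℝ) (hW : Wᵀ * W = 1) :
    (k : ℝ) - ((n : ℝ) - (d : ℝ)) ≤ ∑ i, ∑ j, ((Vᵀ * W) i j) ^ 2 := by
  have hQs : (1 - V * Vᵀ)ᵀ = 1 - V * Vᵀ := coproj_symm V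
  have hQi : (1 - V * Vᵀ) * (1 - V * Vᵀ) = 1 - V * Vᵀ := coproj_idem V hV
  have h0 : ∑ i, ∑ j, ((Vᵀ * W) i j) ^ 2 = frobSq (Vᵀ * W) := rfl
  rw [h0, frobSq_eq_trace]
  have h1 : ((Vᵀ * W)ᵀ * (Vᵀ * W)).trace
      = ((Wᵀ * W).trace - ((1 - V * Vᵀ) * (W * Wᵀ)).trace) := by
    rw [Matrix.transpose_mul, Matrix.transpose_transpose]
    have : Wᵀ * V * (Vᵀ * W) = Wᵀ * ((1 : Matrix (Fin n) (Fin n) ℝ)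
        - (1 - V * Vᵀ)) * W := by
      rw [sub_sub_cancel, Matrix.mul_assoc, ← Matrix.mul_assoc V Vᵀ W,
        ← Matrix.mul_assoc Wᵀ (V * Vᵀ) W]
    rw [this, Matrix.mul_sub, Matrix.mul_one, Matrix.sub_mul, Matrix.trace_sub]
    congr 1
    rw [Matrix.mul_assoc, Matrix.trace_mul_comm, ← Matrix.mul_assoc]
  rw [h1]
  have h2 : ((1 - V * Vᵀ) * (W * Wᵀ)).trace ≤ (n : ℝ) - (k : ℝ) := by
    have h3 := trace_mul_proj_le W (X := (1 - V * Vᵀ)) hW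
    rw [hQs, hQi] at h3
    have h4 : ((1 : Matrix (Fin n) (Fin n) ℝ) - V * Vᵀ).trace = (n : ℝ) - (k : ℝ) := by
      rw [Matrix.trace_sub, Matrix.trace_one, Matrix.trace_mul_comm, hV, Matrix.trace_one]
      simp
    rw [h4] at h3
    exact h3
  have h5 : (Wᵀ * W).trace = (d : ℝ) := by rw [hW, Matrix.trace_one]; simp
  rw [h5]
  linarith

lemma ortho_matrix {n d : ℕ} (v : Fin d → EuclideanSpace ℝ (Fin n))
    (hv : Orthonormal ℝ v) :
    (Matrix.of fun q j => v j q)ᵀ * (Matrix.of fun q j => v j q) = 1 := by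
  ext j j'
  have h := orthonormal_iff_ite.mp hv j j'
  simp only [PiLp.inner_apply, RCLike.inner_apply, starRingEnd_apply, star_trivial] at h
  rw [Matrix.mul_apply, Matrix.one_apply, ← h]
  exact Finset.sum_congr rfl fun q _ => by
    simp [Matrix.transpose_apply, Matrix.of_apply, mul_comm]

lemma zw_zero {mm n d : ℕ} (Z : Matrix (Fin mm) (Fin n) ℝ)
    (v : Fin d → EuclideanSpace ℝ (Fin n)) (hz : ∀ j, Z.mulVec (v j) = 0) :
    Z * (Matrix.of fun q j => v j q) = 0 := by
  ext p j
  simp only [Matrix.mul_apply, Matrix.of_apply, Matrix.zero_apply]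
  exact congrFun (hz j) p

lemma exists_W {mm n : ℕ} (r : ℕ) (Z : Matrix (Fin mm) (Fin n) ℝ) (hZ : Z.rank ≤ r) :
    ∃ d : ℕ, ((n:ℝ) - r ≤ d) ∧ ∃ W : Matrix (Fin n) (Fin d) ℝ,
      Wᵀ * W = 1 ∧ Z * W = 0 := by
  classical
  let e := (WithLp.linearEquiv 2 ℝ (∀ _ : Fin n, ℝ))
  let f : EuclideanSpace ℝ (Fin n) →ₗ[ℝ] (Fin mm → ℝ) := Z.mulVecLin ∘ₗ e.toLinearMap
  have hrange : LinearMap.range f = LinearMap.range Z.mulVecLin := by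
    rw [LinearMap.range_comp, LinearEquiv.range, Submodule.map_top]
  have hrn := LinearMap.finrank_range_add_finrank_ker f
  have hdim : Module.finrank ℝ (EuclideanSpace ℝ (Fin n)) = n := by
    simp [finrank_euclideanSpace]
  rw [hdim, hrange] at hrn
  have hrank : Module.finrank ℝ (LinearMap.range Z.mulVecLin) = Z.rank := rfl
  rw [hrank] at hrn
  let K := LinearMap.ker f
  let d := Module.finrank ℝ K
  have hdK : Module.finrank ℝ K = d := rfl
  refine ⟨d, ?_, ?_⟩
  · have : (Z.rank : ℝ) + d = n := by exact_mod_cast congrArg (Nat.cast : ℕ → ℝ) hrn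
    have hr : (Z.rank : ℝ) ≤ r := by exact_mod_cast hZ
    linarith
  · let b := stdOrthonormalBasis ℝ K
    have hb : Orthonormal ℝ (fun j : Fin d => ((b j : K) : EuclideanSpace ℝ (Fin n))) := by
      rw [orthonormal_iff_ite]
      intro i j
      exact orthonormal_iff_ite.mp b.orthonormal i j
    refine ⟨_, ortho_matrix _ hb, zw_zero _ _ fun j => ?_⟩
    have hmem : (b j : K).1 ∈ K := (b j).2
    have h0 : f ((b j : K) : EuclideanSpace ℝ (Fin n)) = 0 := hmem
    exact h0

lemma rearrange {k : ℕ} (r : ℕ) (σ : Fin k → ℝ) (hσ0 : ∀ i, 0 ≤ σ i)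
    (hmono : ∀ i j : Fin k, i ≤ j → σ j ≤ σ i)
    (c : Fin k → ℝ) (hc0 : ∀ i, 0 ≤ c i) (hc1 : ∀ i, c i ≤ 1)
    (hsum : (k:ℝ) - r ≤ ∑ i, c i) :
    ∑ i ∈ Finset.univ.filter (fun i : Fin k => r ≤ (i:ℕ)), σ i ^ 2
      ≤ ∑ i, σ i ^ 2 * c i := by
  by_cases hrk : k ≤ r
  · have hempty : Finset.univ.filter (fun i : Fin k => r ≤ (i:ℕ)) = ∅ := by
      ext i; simp only [Finset.mem_filter, Finset.mem_univ, true_and, Finset.notMem_empty,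
        iff_false]
      have := i.2; omega
    rw [hempty, Finset.sum_empty]
    exact Finset.sum_nonneg fun i _ => mul_nonneg (sq_nonneg _) (hc0 i)
  · push_neg at hrk
    set s := Finset.univ.filter (fun i : Fin k => r ≤ (i:ℕ)) with hs
    set sc := Finset.univ.filter (fun i : Fin k => ¬ r ≤ (i:ℕ)) with hsc
    have hcard : (s.card : ℝ) = (k:ℝ) - r := by
      have h1 : s = Finset.Ici (⟨r, hrk⟩ : Fin k) := by
        ext i; simp [hs, Fin.le_def]
      rw [h1, Fin.card_Ici]
      push_cast [Nat.cast_sub (le_of_lt hrk)]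
      ring
    have ht0 : 0 ≤ σ ⟨r, hrk⟩ ^ 2 := sq_nonneg _
    have hle : ∀ i ∈ s, σ i ^ 2 ≤ σ ⟨r, hrk⟩ ^ 2 := by
      intro i hi
      have : (⟨r, hrk⟩ : Fin k) ≤ i := by
        simp only [hs, Finset.mem_filter] at hi; exact hi.2
      exact pow_le_pow_left₀ (hσ0 i) (hmono _ _ this) 2
    have hge : ∀ i ∈ sc, σ ⟨r, hrk⟩ ^ 2 ≤ σ i ^ 2 := by
      intro i hi
      have : i ≤ (⟨r, hrk⟩ : Fin k) := by
        simp only [hsc, Finset.mem_filter, not_le] at hi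
        exact le_of_lt hi.2
      exact pow_le_pow_left₀ (hσ0 _) (hmono _ _ this) 2
    have hsplit : ∑ i, σ i ^ 2 * c i = ∑ i ∈ s, σ i ^2 * c i + ∑ i ∈ sc, σ i ^2 * c i := by
      rw [hs, hsc, Finset.sum_filter_add_sum_filter_not]
    have hsplitc : ∑ i, c i = ∑ i ∈ s, c i + ∑ i ∈ sc, c i := by
      rw [hs, hsc, Finset.sum_filter_add_sum_filter_not]
    have h1 : ∑ i ∈ s, σ i ^ 2 - ∑ i ∈ s, σ i ^2 * c i
        = ∑ i ∈ s, σ i ^2 * (1 - c i) := by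
      rw [← Finset.sum_sub_distrib]
      exact Finset.sum_congr rfl fun i _ => by ring
    have h2 : ∑ i ∈ s, σ i ^2 * (1 - c i) ≤ σ ⟨r, hrk⟩ ^2 * ∑ i ∈ s, (1 - c i) := by
      rw [Finset.mul_sum]
      exact Finset.sum_le_sum fun i hi =>
        mul_le_mul_of_nonneg_right (hle i hi) (by linarith [hc1 i])
    have h3 : ∑ i ∈ s, (1 - c i) ≤ ∑ i ∈ sc, c i := by
      rw [Finset.sum_sub_distrib, Finset.sum_const, nsmul_eq_mul]
      have := hsum
      rw [hsplitc] at this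
      have hc : (s.card : ℝ) = (k:ℝ) - r := hcard
      linarith
    have h4 : σ ⟨r, hrk⟩ ^2 * ∑ i ∈ sc, c i ≤ ∑ i ∈ sc, σ i ^2 * c i := by
      rw [Finset.mul_sum]
      exact Finset.sum_le_sum fun i hi =>
        mul_le_mul_of_nonneg_right (hge i hi) (hc0 i)
    have h5 : σ ⟨r, hrk⟩ ^2 * ∑ i ∈ s, (1 - c i) ≤ σ ⟨r, hrk⟩ ^2 * ∑ i ∈ sc, c i :=
      mul_le_mul_of_nonneg_left h3 ht0
    linarith

end EYMaux

open EYMaux in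
/-- Eckart–Young–Mirsky in the Frobenius norm: the truncation of the SVD to the top `r`
singular values is a best rank-`r` approximation, with error `Σ_{i > r} σ_i²`. -/
theorem eckart_young_mirsky {m n k : ℕ} (r : ℕ)
    (M : Matrix (Fin m) (Fin n) ℝ)
    (U : Matrix (Fin m) (Fin k) ℝ) (V : Matrix (Fin n) (Fin k) ℝ)
    (σ : Fin k → ℝ)
    (hU : Uᵀ * U = 1) (hV : Vᵀ * V = 1)
    (hσ_nonneg : ∀ i, 0 ≤ σ i)
    (hσ_mono : ∀ i j : Fin k, i ≤ j → σ j ≤ σ i)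
    (hM : M = ∑ i, σ i • Matrix.vecMulVec (fun p => U p i) (fun q => V q i))
    (Mr : Matrix (Fin m) (Fin n) ℝ)
    (hMr : Mr = ∑ i ∈ Finset.univ.filter (fun i : Fin k => (i : ℕ) < r),
      σ i • Matrix.vecMulVec (fun p => U p i) (fun q => V q i)) :
    frobSq (M - Mr) = ∑ i ∈ Finset.univ.filter (fun i : Fin k => r ≤ (i : ℕ)), σ i ^ 2 ∧
    ∀ Z : Matrix (Fin m) (Fin n) ℝ, Z.rank ≤ r →
      (∑ i ∈ Finset.univ.filter (fun i : Fin k => r ≤ (i : ℕ)), σ i ^ 2) ≤ frobSq (M - Z) := by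
  have hM' : M = U * Matrix.diagonal σ * Vᵀ := by
    rw [hM, sum_smul_vecMulVec]
    simp
  have hMr' : Mr = U * Matrix.diagonal (fun i : Fin k => if (i : ℕ) < r then σ i else 0) * Vᵀ := by
    rw [hMr, sum_smul_vecMulVec]
    congr 1
    congr 1
    funext i
    simp
  constructor
  · -- part 1
    have hdiff : M - Mr
        = U * Matrix.diagonal (fun i : Fin k => if r ≤ (i : ℕ) then σ i else 0) * Vᵀ := by
      have hdd : Matrix.diagonal σ
            - Matrix.diagonal (fun i : Fin k => if (i : ℕ) < r then σ i else 0)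
          = Matrix.diagonal (fun i : Fin k => if r ≤ (i : ℕ) then σ i else 0) := by
        ext i j
        by_cases hij : i = j
        · subst hij
          by_cases h : (i : ℕ) < r <;>
            simp [Matrix.diagonal_apply_eq, h, Nat.not_lt.mp, not_le.mpr]
        · simp [Matrix.diagonal_apply_ne _ hij, hij]
      rw [hM', hMr', ← Matrix.sub_mul, ← Matrix.mul_sub, hdd]
    rw [hdiff, Matrix.mul_assoc, frobSq_mul_left U hU, frobSq_mul_right V hV,
      frobSq_diagonal]
    rw [Finset.sum_filter]
    exact Finset.sum_congr rfl fun i _ => by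
      by_cases h : r ≤ (i : ℕ) <;> simp [h]
  · -- part 2
    intro Z hZ
    obtain ⟨d, hd, W, hW, hZW⟩ := exists_W r Z hZ
    have key1 : frobSq ((M - Z) * W) ≤ frobSq (M - Z) := frobSq_mul_le _ W hW
    have hMZW : (M - Z) * W = M * W := by rw [Matrix.sub_mul, hZW, sub_zero]
    have hMW : M * W = U * (Matrix.diagonal σ * (Vᵀ * W)) := by
      rw [hM', Matrix.mul_assoc, Matrix.mul_assoc]
    have hfr : frobSq (M * W) = ∑ i, σ i ^ 2 * ∑ j, ((Vᵀ * W) i j) ^ 2 := by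
      rw [hMW, frobSq_mul_left U hU, frobSq_diagonal_mul]
    set c : Fin k → ℝ := fun i => ∑ j, ((Vᵀ * W) i j) ^ 2 with hc
    have hc0 : ∀ i, 0 ≤ c i := fun i => Finset.sum_nonneg fun j _ => sq_nonneg _
    have hc1 : ∀ i, c i ≤ 1 := fun i => c_le_one V hV W hW i
    have hcsum : (k : ℝ) - r ≤ ∑ i, c i := by
      have := sumc_ge V hV W hW
      linarith
    have hmain := rearrange r σ hσ_nonneg hσ_mono c hc0 hc1 hcsum
    calc ∑ i ∈ Finset.univ.filter (fun i : Fin k => r ≤ (i : ℕ)), σ i ^ 2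
        ≤ ∑ i, σ i ^ 2 * c i := hmain
      _ = frobSq (M * W) := hfr.symm
      _ = frobSq ((M - Z) * W) := by rw [hMZW]
      _ ≤ frobSq (M - Z) := key1
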